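/- For all integers i, j and any polynomial g(s,t) in two variables over ℂ, and parameters λ, α ∈ ℂ*, β ∈ ℂ, define operators E_i(g)(s,t) = λ^i·α·g(s−i, t−2) and F_j(g)(s,t) = −(λ^j/α)·(t/2 − β)(t/2 + β + 1)·g(s−j, t+2). Then (E_i ∘ F_j − F_j ∘ E_i)(g)(s,t) = λ^{i+j}·t·g(s−i−j, t), i.e., the commutator [e_i, f_j] acts as multiplication by λ^{i+j} t composed with the shift s ↦ s−i−j. -/

import Mathlib

open MvPolynomial

abbrev R2 : Type := MvPolynomial (Fin 2) ℂ

/-- Substitution `g(s,t) ↦ g(s - u, t + v)`. -/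
noncomputable def sh (u v : ℂ) : R2 →ₐ[ℂ] R2 := aeval ![X 0 - C u, X 1 + C v]

/-- Action of `e_i` in `Ω(λ,α,β,γ)`. -/
noncomputable def omE (lam a : ℂ) (i : ℤ) (g : R2) : R2 :=
  C (lam ^ i * a) * sh (i : ℂ) (-2) g

/-- Action of `f_i` in `Ω(λ,α,β,γ)`. -/
noncomputable def omF (lam a b : ℂ) (i : ℤ) (g : R2) : R2 :=
  C (-(lam ^ i / a)) * (C 2⁻¹ * X 1 - C b) * (C 2⁻¹ * X 1 + C b + 1) * sh (i : ℂ) 2 g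

/-- Action of `h_i` in `Ω(λ,α,β,γ)`. -/
noncomputable def opH (lam : ℂ) (i : ℤ) (g : R2) : R2 :=
  C (lam ^ i) * X 1 * sh (i : ℂ) 0 g

lemma sh_C (u v c : ℂ) : sh u v (C c) = C c := by simp [sh, algebraMap_eq]
lemma sh_X1 (u v : ℂ) : sh u v (X 1) = X 1 + C v := by simp [sh]
lemma sh_sh (u v u' v' : ℂ) (g : R2) :
    sh u v (sh u' v' g) = sh (u + u') (v + v') g := by
  have h : (sh u v).comp (sh u' v') = sh (u + u') (v + v') := by
    apply MvPolynomial.algHom_ext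
    intro k
    fin_cases k <;> simp [sh, map_add, map_sub] <;> ring
  exact congrFun (congrArg DFunLike.coe h) g
theorem stmt0 (lam a : ℂ) (hlam : lam ≠ 0) (ha : a ≠ 0) (b : ℂ) (i j : ℤ)
    (g : R2) :
    omE lam a i (omF lam a b j g) - omF lam a b j (omE lam a i g)
      = opH lam (i + j) g := by
  unfold omE omF opH
  simp only [map_mul, map_add, map_sub, map_one, sh_C, sh_X1, sh_sh]
  rw [show ((-2:ℂ) + 2) = 0 by norm_num, show ((2:ℂ) + -2) = 0 by norm_num,
    show ((j:ℂ) + i) = (i:ℂ) + j by ring, show (((i+j:ℤ)):ℂ) = (i:ℂ) + j by push_cast; ring]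
  have key : (C (lam ^ i) : R2) * C a * C (-(lam ^ j / a)) = -C (lam ^ (i + j)) := by
    rw [← C_mul, ← C_mul, ← C_neg]
    congr 1
    field_simp
    rw [zpow_add₀ hlam]
  have h1 : (C (2⁻¹:ℂ) : R2) * C (-2 : ℂ) = -1 := by
    rw [← C_mul]; norm_num
  have h2 : (2 : R2) * C (2⁻¹ : ℂ) = 1 := by
    rw [(map_ofNat C 2).symm, ← C_mul]; norm_num
  set y : R2 := C (2⁻¹ : ℂ)
  set m : R2 := C (-2 : ℂ)
  set T : R2 := X 1
  set P : R2 := sh ((i : ℂ) + j) 0 g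
  set D : R2 := C (lam ^ (i + j))
  linear_combination (C (lam ^ i) * C a * C (-(lam ^ j / a)) * P * (2*y*T + y*m)) * h1
    + (-2*y*T*P) * key + (D*T*P) * h2
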